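/- Every ss-reducible string w has exactly one nonempty suffix palindrome: there is exactly one integer r ≥ 1 such that 2r ≤ |w| and w[|w|−2r+1 : |w|] = x xᴿ for some string x (equivalently, exactly one r ≥ 1 with ρ_w(|w|−r) ≥ r). -/

import Mathlib

/-!
Common definitions: strings as `List α` over an alphabet `α`, 1-based positions.
-/

variable {α : Type*}

/-- The substring `w[i:j]` (1-based, inclusive; empty when `j < i`). -/
def seg (w : List α) (i j : ℕ) : List α := (w.take j).drop (i - 1)

/-- `w` has an even palindrome of radius `r` centered at position `c`:
`r ≤ c`, `c + r ≤ |w|` and `w[c−k+1] = w[c+k]` for all `1 ≤ k ≤ r`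
(here expressed with 0-based list indexing: `w[c−k]? = w[c+k−1]?`). -/
def PalAt (w : List α) (c r : ℕ) : Prop :=
  r ≤ c ∧ c + r ≤ w.length ∧ ∀ k, 1 ≤ k → k ≤ r → w[c - k]? = w[c + k - 1]?

/-- `ρ_w(c)`: the maximal even-palindrome radius at center `c`. -/
noncomputable def rho (w : List α) (c : ℕ) : ℕ := sSup {r | PalAt w c r}

/-- The reduction relation: `x y yᴿ y z → x y z` for nonempty `y`. -/
def Reduces (w w' : List α) : Prop :=
  ∃ x y z : List α, y ≠ [] ∧ w = x ++ y ++ y.reverse ++ y ++ z ∧ w' = x ++ y ++ z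

/-- A string is irreducible if no reduction applies to it. -/
def ZIrreducible (w : List α) : Prop := ∀ w', ¬ Reduces w w'

def ZReducible (w : List α) : Prop := ∃ w', Reduces w w'

/-- `w` is pp-irreducible if its longest proper prefix `w[1:|w|−1]` is irreducible. -/
def PPIrreducible (w : List α) : Prop := ZIrreducible w.dropLast

/-- `w` is ss-reducible if it is reducible and pp-irreducible. -/
def SSReducible (w : List α) : Prop := ZReducible w ∧ PPIrreducible w

/-- A Z-shape occurrence `⟨p1, p2⟩` in `w`: with `s = p2 − p1 ≥ 1`, `p1 − s ≥ 0`,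
`p2 + s ≤ |w|` and `w[p1−s+1 : p2+s] = x xᴿ x` where `x = w[p1−s+1 : p1]`. -/
def ZOcc (w : List α) (p1 p2 : ℕ) : Prop :=
  p1 < p2 ∧ p2 - p1 ≤ p1 ∧ p2 + (p2 - p1) ≤ w.length ∧
    seg w (p1 - (p2 - p1) + 1) (p2 + (p2 - p1)) =
      seg w (p1 - (p2 - p1) + 1) p1 ++ (seg w (p1 - (p2 - p1) + 1) p1).reverse ++
        seg w (p1 - (p2 - p1) + 1) p1

/-- `c ⊏_w d` : `c ≤ d − ρ_w(d) ≤ d ≤ c + ρ_w(c) ≤ d + ρ_w(d)` with `c ≠ d`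
(written without truncated subtraction). -/
def Sqsub (w : List α) (c d : ℕ) : Prop :=
  c < d ∧ c + rho w d ≤ d ∧ d ≤ c + rho w c ∧ c + rho w c ≤ d + rho w d

/-- `𝓕_w(c)`: the maximum frontier over all palindrome chains from `c`
(a palindrome chain is a nonempty list starting at `c` whose consecutive
elements are related by `⊏_w`; its frontier is `e + ρ_w(e)` for its last element `e`). -/
noncomputable def maxFrontier (w : List α) (c : ℕ) : ℕ :=
  sSup {f | ∃ l : List ℕ, l.head? = some c ∧ l.Chain' (Sqsub w) ∧
      ∃ e, l.getLast? = some e ∧ f = e + rho w e}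

/-- `𝓐_w(d)`: the smallest position `c` with `c ≤ d ≤ 𝓕_w(c)`. -/
noncomputable def originator (w : List α) (d : ℕ) : ℕ :=
  sInf {c | 1 ≤ c ∧ c ≤ d ∧ d ≤ maxFrontier w c}

/-- A position `c` of a pp-irreducible string `w` is stable if `𝓕_w(c) < |w|`. -/
def Stable (w : List α) (c : ℕ) : Prop := maxFrontier w c < w.length

/-- `c` is strongly stable if every position in `[1:c]` is stable. -/
def StronglyStable (w : List α) (c : ℕ) : Prop := ∀ e, 1 ≤ e → e ≤ c → Stable w e

/-- `T` is the output of an end-to-end walk on the path graph labeled `u`: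
there are vertices `p 0 = 0, …, p |T| = |u|`, each `≤ |u|`, consecutive ones
adjacent, and `T[i] = u[max (p (i−1)) (p i)]` (1-based; here 0-based indexing). -/
def EndToEndWalkOutput (u T : List α) : Prop :=
  ∃ p : ℕ → ℕ, p 0 = 0 ∧ p T.length = u.length ∧
    (∀ i, i ≤ T.length → p i ≤ u.length) ∧
    (∀ i, i < T.length → p (i + 1) = p i + 1 ∨ p i = p (i + 1) + 1) ∧
    (∀ i, i < T.length → T[i]? = u[max (p i) (p (i + 1)) - 1]?)

/-- `P` is accurate enough between `a` and `b`:
`min (P e) (b − e) = min (ρ_w e) (b − e)` for all `e ∈ [a:b]`. -/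
def AccEnough (w : List α) (P : ℕ → ℕ) (a b : ℕ) : Prop :=
  ∀ e, a ≤ e → e ≤ b → min (P e) (b - e) = min (rho w e) (b - e)

open Classical in
/-- `ν_w(c)`: the largest `e` with `e ⊏_w c`, or `1` if there is none. -/
noncomputable def nu (w : List α) (c : ℕ) : ℕ :=
  if ∃ e, Sqsub w e c then sSup {e | Sqsub w e c} else 1

/-- `c` is left-good w.r.t. `P` if `P` is accurate enough between `ν_w(c)` and `c`. -/
def LeftGood (w : List α) (P : ℕ → ℕ) (c : ℕ) : Prop := AccEnough w P (nu w c) c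

/-- `c` is right-good w.r.t. `P` if `P` is accurate enough between `c` and `c + ρ_w(c)`. -/
def RightGood (w : List α) (P : ℕ → ℕ) (c : ℕ) : Prop := AccEnough w P c (c + rho w c)


private lemma sfx_of_sfx_le {s₁ s₂ w : List α} (h1 : s₁ <:+ w) (h2 : s₂ <:+ w)
    (h : s₁.length ≤ s₂.length) : s₁ <:+ s₂ := by
  rw [← List.reverse_prefix] at h1 h2 ⊢
  exact List.prefix_of_prefix_length_le h1 h2 (by simpa)

private lemma zred_of_suffix {w z t : List α} (hz : z ≠ []) (ht : t ≠ [])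
    (h : z ++ z.reverse ++ z ++ t <:+ w) : ZReducible w.dropLast := by
  obtain ⟨a, ha⟩ := h
  refine ⟨a ++ z ++ t.dropLast, a, z, t.dropLast, hz, ?_, rfl⟩
  rw [← ha, show a ++ (z ++ z.reverse ++ z ++ t) = (a ++ (z ++ z.reverse ++ z)) ++ t from by
    simp [List.append_assoc], List.dropLast_append_of_ne_nil ht]
  simp [List.append_assoc]

private lemma caseSmall {w x y q : List α} (hy : y ≠ []) (hq : q ≠ [])
    (hw : w = x ++ y ++ y.reverse ++ y) (hqs : q ++ q.reverse <:+ w)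
    (hle : 2 * q.length ≤ y.length) : ZReducible w.dropLast := by
  have hyw : y <:+ w := ⟨x ++ y ++ y.reverse, by rw [hw]⟩
  have h1 : q ++ q.reverse <:+ y := sfx_of_sfx_le hqs hyw (by simp; omega)
  obtain ⟨y₀, hy₀⟩ := h1
  have hsfx : q.reverse ++ q.reverse.reverse ++ q.reverse ++ (y₀.reverse ++ y) <:+ w := by
    refine ⟨x ++ y₀ ++ q, ?_⟩
    rw [hw, ← hy₀]
    simp [List.reverse_append, List.append_assoc]
  exact zred_of_suffix (by simpa using hq) (by simp [hy]) hsfx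

private lemma caseA {w p q : List α} (hq0 : q ≠ [])
    (h12 : q.length < p.length) (h21 : p.length ≤ 2 * q.length)
    (hqs : q ++ q.reverse <:+ w) (hps : p ++ p.reverse <:+ w) :
    ZReducible w.dropLast := by
  have hqp : q ++ q.reverse <:+ p ++ p.reverse :=
    sfx_of_sfx_le hqs hps (by simp; omega)
  obtain ⟨c, hc⟩ := hqp
  have hcl : c.length = 2 * (p.length - q.length) := by
    have := congrArg List.length hc
    simp only [List.length_append, List.length_reverse] at this
    omega
  have e0 : q ++ q.reverse = (p ++ p.reverse).drop (2 * (p.length - q.length)) := by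
    rw [← hc, List.drop_left' hcl]
  have e1 : q = p.drop (2 * (p.length - q.length)) ++ (p.drop q.length).reverse := by
    have h1 : (q ++ q.reverse).take q.length = q := List.take_left' rfl
    conv_lhs => rw [← h1]
    rw [e0, List.drop_append_of_le_length (by omega), List.take_append]
    congr 1
    · exact List.take_of_length_le (by simp only [List.length_drop]; omega)
    · rw [List.reverse_drop]
      congr 1
      simp only [List.length_drop]
      omega
  have e2 : q = p.take q.length := by
    have h2 := List.drop_left (l₁ := c ++ q) (l₂ := q.reverse)
    rw [List.append_assoc, hc] at h2
    have h3 : (c ++ q).length = p.length + (p.length - q.length) := by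
      simp only [List.length_append, hcl]
      omega
    rw [h3, List.drop_append, List.drop_eq_nil_of_le (by omega), List.nil_append,
      show p.length + (p.length - q.length) - p.length = p.length - q.length by omega] at h2
    apply List.reverse_injective
    rw [← h2, List.reverse_take]
  have hz : p.drop q.length ≠ [] := by
    intro hnil
    have := congrArg List.length hnil
    simp only [List.length_drop, List.length_nil] at this
    omega
  have hp0 := List.take_append_drop q.length p
  rw [← e2] at hp0
  nth_rewrite 1 [e1] at hp0
  have hp : p = p.drop (2 * (p.length - q.length)) ++
      ((p.drop q.length).reverse ++ p.drop q.length) := by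
    rw [← List.append_assoc]
    exact hp0.symm
  have hsfx : (p.drop q.length).reverse ++ (p.drop q.length).reverse.reverse ++
      (p.drop q.length).reverse ++
      (p.drop q.length ++ (p.drop (2 * (p.length - q.length))).reverse) <:+ w := by
    apply List.IsSuffix.trans _ hps
    refine ⟨p.drop (2 * (p.length - q.length)), ?_⟩
    conv_rhs => rw [hp]
    simp [List.reverse_append, List.append_assoc]
  exact zred_of_suffix (by simpa using hz) (by simp [hz]) hsfx

private lemma caseB {w x y p : List α} (hy : y ≠ [])
    (hw : w = x ++ y ++ y.reverse ++ y) (hps : p ++ p.reverse <:+ w)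
    (hgt : 2 * y.length < p.length) : ZReducible w.dropLast := by
  have hm : 0 < y.length := List.length_pos_iff.mpr hy
  have hyyy : y ++ y.reverse ++ y <:+ w := ⟨x, by rw [hw]; simp [List.append_assoc]⟩
  have h1 : y ++ y.reverse ++ y <:+ p ++ p.reverse :=
    sfx_of_sfx_le hyyy hps (by simp; omega)
  obtain ⟨c, hc⟩ := h1
  have hcne : c ≠ [] := by
    have hlc := congrArg List.length hc
    simp only [List.length_append, List.length_reverse] at hlc
    intro hnil
    rw [hnil] at hlc
    simp at hlc
    omega
  have h2 : p ++ p.reverse = y.reverse ++ y.reverse.reverse ++ y.reverse ++ c.reverse := by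
    have hpal : (p ++ p.reverse).reverse = p ++ p.reverse := by simp
    rw [← hpal, ← hc]
    simp [List.reverse_append, List.append_assoc]
  have hsfx : y.reverse ++ y.reverse.reverse ++ y.reverse ++ c.reverse <:+ w := by
    rw [← h2]; exact hps
  exact zred_of_suffix (by simpa using hy) (by simpa using hcne) hsfx

/-- every ss-reducible string has exactly one nonempty suffix palindrome:
exactly one `r ≥ 1` with `2r ≤ |w|` and `w[|w|−2r+1 : |w|] = x xᴿ` for some `x`. -/
theorem ssReducible_unique_suffix_palindrome (w : List α) (h : SSReducible w) :
    ∃! r : ℕ, 1 ≤ r ∧ 2 * r ≤ w.length ∧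
      ∃ x : List α, seg w (w.length - 2 * r + 1) w.length = x ++ x.reverse := by
  obtain ⟨⟨w', x, y, z, hy, hw, hw'⟩, hpp⟩ := h
  have hznil : z = [] := by
    by_contra hz
    exact hpp (x ++ y ++ z.dropLast)
      ⟨x, y, z.dropLast, hy, by rw [hw, List.dropLast_append_of_ne_nil hz], rfl⟩
  subst hznil
  rw [List.append_nil] at hw
  have hm : 0 < y.length := List.length_pos_iff.mpr hy
  have hlw : w.length = x.length + 3 * y.length := by
    rw [hw]
    simp only [List.length_append, List.length_reverse]
    omega
  have hseg : ∀ r : ℕ, seg w (w.length - 2 * r + 1) w.length = w.drop (w.length - 2 * r) := by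
    intro r
    simp [seg]
  refine ⟨y.length, ⟨hm, by omega, y.reverse, ?_⟩, ?_⟩
  · rw [hseg, show w.length - 2 * y.length = (x ++ y).length from by
      simp only [List.length_append]; omega,
      show w = (x ++ y) ++ (y.reverse ++ y.reverse.reverse) from by rw [hw]; simp,
      List.drop_left]
  · rintro r ⟨hr1, hr2, x', hx'⟩
    rw [hseg] at hx'
    have hxl : x'.length = r := by
      have := congrArg List.length hx'
      simp only [List.length_drop, List.length_append, List.length_reverse] at this
      omega
    have hxs : x' ++ x'.reverse <:+ w := by
      rw [← hx']
      exact List.drop_suffix _ _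
    have hx0 : x' ≠ [] := by
      intro hnil
      rw [hnil] at hxl
      simp at hxl
      omega
    by_contra hne
    have hyrs : y.reverse ++ y.reverse.reverse <:+ w :=
      ⟨x ++ y, by rw [hw]; simp [List.append_assoc]⟩
    have hzr : ZReducible w.dropLast := by
      by_cases h1 : 2 * r ≤ y.length
      · exact caseSmall hy hx0 hw hxs (by omega)
      · by_cases h2 : r < y.length
        · exact caseA hx0 (p := y.reverse) (by simp; omega) (by simp; omega) hxs hyrs
        · by_cases h3 : r ≤ 2 * y.length
          · exact caseA (q := y.reverse) (by simpa using hy) (by simp; omega)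
              (by simp; omega) hyrs hxs
          · exact caseB hy hw hxs (by omega)
    obtain ⟨w'', hw''⟩ := hzr
    exact hpp w'' hw''
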